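/- arXiv:1509.06260 — 3 statements merged into one kernel-verified Lean document; each statement's English description precedes it below -/
import Mathlib

section
/- If the probability vectors X^k satisfy the master equations Ẋ^k = A^k X^{k-1} + B^k X^k + C^k X^{k+1} (k = 0,…,N, with A^0, A^{N+1}, C^{-1}, C^N zero), then the expected number of infected nodes [I](t) = Σ_k k S_k X^k(t) satisfies the exact differential equation d[I]/dt = τ[SI] − γ[I]. -/
/-- Number of infected nodes in a state. -/
def infCount {N : ℕ} (s : Fin N → Bool) : ℕ :=
  (Finset.univ.filter (fun i => s i)).card

/-- Exact mean-field equation: if X solves the master equations with generator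
P = A + B + C (A the infection part, increasing the infected count by one;
C the recovery part, decreasing it by one; B diagonal), with column sum
identities Σ_s C s s' = γ·infCount s', Σ_s A s s' = τ·N_{SI}^f(s'), and all
column sums of P zero, then [I](t) = Σ_s infCount(s)·X_t(s) satisfies
d[I]/dt = τ[SI] − γ[I]. -/
theorem stmt12 {N : ℕ} (τ γ : ℝ) (n : (Fin N → Bool) → ℝ)
    (A B C : Matrix (Fin N → Bool) (Fin N → Bool) ℝ)
    (hA : ∀ s s', A s s' ≠ 0 → infCount s = infCount s' + 1)
    (hC : ∀ s s', C s s' ≠ 0 → infCount s + 1 = infCount s')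
    (hBdiag : ∀ s s', s ≠ s' → B s s' = 0)
    (hCsum : ∀ s', ∑ s, C s s' = γ * infCount s')
    (hAsum : ∀ s', ∑ s, A s s' = τ * n s')
    (hcol : ∀ s', ∑ s, (A s s' + B s s' + C s s') = 0)
    (X : ℝ → (Fin N → Bool) → ℝ)
    (hX : ∀ s t, HasDerivAt (fun u => X u s)
      (∑ s', (A s s' + B s s' + C s s') * X t s') t)
    (t : ℝ) :
    HasDerivAt (fun u => ∑ s, (infCount s : ℝ) * X u s)
      (τ * (∑ s, n s * X t s) - γ * ∑ s, (infCount s : ℝ) * X t s) t := by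
  have key : ∀ s' : Fin N → Bool,
      ∑ s, (infCount s : ℝ) * (A s s' + B s s' + C s s')
        = τ * n s' - γ * infCount s' := by
    intro s'
    have h1 : ∀ s : Fin N → Bool,
        (infCount s : ℝ) * (A s s' + B s s' + C s s')
          = (infCount s' : ℝ) * (A s s' + B s s' + C s s') + A s s' - C s s' := by
      intro s
      by_cases hAne : A s s' = 0
      · by_cases hCne : C s s' = 0
        · by_cases hBne : B s s' = 0
          · simp [hAne, hBne, hCne]
          · have : s = s' := by
              by_contra h; exact hBne (hBdiag s s' h)
            subst this
            simp [hAne, hCne]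
        · have := hC s s' hCne
          have hcast : (infCount s' : ℝ) = (infCount s : ℝ) + 1 := by
            exact_mod_cast congrArg (Nat.cast : ℕ → ℝ) this.symm
          have hB : B s s' = 0 := by
            apply hBdiag
            intro h; subst h; omega
          rw [hcast]; ring_nf; rw [hAne, hB]; ring
      · have := hA s s' hAne
        have hcast : (infCount s : ℝ) = (infCount s' : ℝ) + 1 := by
          exact_mod_cast congrArg (Nat.cast : ℕ → ℝ) this
        have hne : s ≠ s' := by intro h; subst h; omega
        have hB : B s s' = 0 := hBdiag s s' hne
        have hCz : C s s' = 0 := by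
          by_contra h; have := hC s s' h; omega
        rw [hcast, hB, hCz]; ring
    calc ∑ s, (infCount s : ℝ) * (A s s' + B s s' + C s s')
        = ∑ s, ((infCount s' : ℝ) * (A s s' + B s s' + C s s') + A s s' - C s s') := by
          exact Finset.sum_congr rfl fun s _ => h1 s
      _ = (infCount s' : ℝ) * (∑ s, (A s s' + B s s' + C s s'))
            + (∑ s, A s s') - ∑ s, C s s' := by
          rw [Finset.mul_sum]
          rw [Finset.sum_sub_distrib, Finset.sum_add_distrib]
      _ = τ * n s' - γ * infCount s' := by
          rw [hcol s', hAsum s', hCsum s']; ring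
  have hD : HasDerivAt (fun u => ∑ s, (infCount s : ℝ) * X u s)
      (∑ s, (infCount s : ℝ) * ∑ s', (A s s' + B s s' + C s s') * X t s') t := by
    apply HasDerivAt.fun_sum
    intro s _
    exact (hX s t).const_mul _
  convert hD using 1
  have swap : ∑ s, (infCount s : ℝ) * ∑ s', (A s s' + B s s' + C s s') * X t s'
      = ∑ s', (∑ s, (infCount s : ℝ) * (A s s' + B s s' + C s s')) * X t s' := by
    simp_rw [Finset.mul_sum, Finset.sum_mul]
    rw [Finset.sum_comm]
    exact Finset.sum_congr rfl fun s' _ => Finset.sum_congr rfl fun s _ => by ring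
  rw [swap]
  simp_rw [key]
  rw [Finset.mul_sum, Finset.mul_sum, ← Finset.sum_sub_distrib]
  exact (Finset.sum_congr rfl fun s _ => by ring).symm.symm
end

section
/- Under the same hypotheses, the expected number of susceptible nodes [S](t) = Σ_k (N−k) S_k X^k(t) satisfies d[S]/dt = γ[I] − τ[SI]; consequently d([S]+[I])/dt = 0 provided Σ_k S_k Ẋ^k = 0. -/
/-- Under the same hypotheses as the exact mean-field theorem, the expected
number of susceptible nodes [S](t) = Σ_s (N − infCount s)·X_t(s) satisfies
d[S]/dt = γ[I] − τ[SI]; consequently d([S]+[I])/dt = 0 (the total-probability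
derivative Σ_s Ẋ_s vanishes since all column sums of the generator are zero). -/
theorem stmt13 {N : ℕ} (τ γ : ℝ) (n : (Fin N → Bool) → ℝ)
    (A B C : Matrix (Fin N → Bool) (Fin N → Bool) ℝ)
    (hA : ∀ s s', A s s' ≠ 0 → infCount s = infCount s' + 1)
    (hC : ∀ s s', C s s' ≠ 0 → infCount s + 1 = infCount s')
    (hBdiag : ∀ s s', s ≠ s' → B s s' = 0)
    (hCsum : ∀ s', ∑ s, C s s' = γ * infCount s')
    (hAsum : ∀ s', ∑ s, A s s' = τ * n s')
    (hcol : ∀ s', ∑ s, (A s s' + B s s' + C s s') = 0)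
    (X : ℝ → (Fin N → Bool) → ℝ)
    (hX : ∀ s t, HasDerivAt (fun u => X u s)
      (∑ s', (A s s' + B s s' + C s s') * X t s') t)
    (t : ℝ) :
    HasDerivAt (fun u => ∑ s, ((N : ℝ) - infCount s) * X u s)
      (γ * (∑ s, (infCount s : ℝ) * X t s) - τ * ∑ s, n s * X t s) t ∧
    HasDerivAt (fun u => (∑ s, ((N : ℝ) - infCount s) * X u s)
      + ∑ s, (infCount s : ℝ) * X u s) 0 t := by
  have hBsum : ∀ s', ∑ s, B s s' = B s' s' := fun s' =>
    Finset.sum_eq_single s' (fun s _ hs => hBdiag s s' hs) (by simp)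
  have hBdiagval : ∀ s', B s' s' = -(τ * n s' + γ * infCount s') := by
    intro s'
    have h := hcol s'
    rw [Finset.sum_add_distrib, Finset.sum_add_distrib, hAsum, hCsum, hBsum] at h
    linarith
  have keyA : ∀ s', ∑ s, (infCount s : ℝ) * A s s'
      = ((infCount s' : ℝ) + 1) * (τ * n s') := by
    intro s'
    rw [← hAsum, Finset.mul_sum]
    refine Finset.sum_congr rfl fun s _ => ?_
    by_cases h : A s s' = 0
    · simp [h]
    · have := hA s s' h
      rw [this]; push_cast; ring
  have keyC : ∀ s', ∑ s, (infCount s : ℝ) * C s s'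
      = ((infCount s' : ℝ) - 1) * (γ * infCount s') := by
    intro s'
    rw [← hCsum, Finset.mul_sum]
    refine Finset.sum_congr rfl fun s _ => ?_
    by_cases h : C s s' = 0
    · simp [h]
    · have h2 := hC s s' h
      have : (infCount s : ℝ) = (infCount s' : ℝ) - 1 := by
        have := congrArg (fun m : ℕ => (m : ℝ)) h2
        push_cast at this; linarith
      rw [this]
  have keyB : ∀ s', ∑ s, (infCount s : ℝ) * B s s'
      = (infCount s' : ℝ) * B s' s' := fun s' =>
    Finset.sum_eq_single s' (fun s _ hs => by rw [hBdiag s s' hs, mul_zero]) (by simp)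
  have keyI : ∀ s', ∑ s, (infCount s : ℝ) * (A s s' + B s s' + C s s')
      = τ * n s' - γ * infCount s' := by
    intro s'
    simp_rw [mul_add]
    rw [Finset.sum_add_distrib, Finset.sum_add_distrib, keyA s', keyB s', keyC s',
      hBdiagval s']
    ring
  have keyS : ∀ s', ∑ s, ((N : ℝ) - infCount s) * (A s s' + B s s' + C s s')
      = γ * infCount s' - τ * n s' := by
    intro s'
    simp_rw [sub_mul]
    rw [Finset.sum_sub_distrib, keyI s', ← Finset.mul_sum, hcol s']
    ring
  have hDS : HasDerivAt (fun u => ∑ s, ((N : ℝ) - infCount s) * X u s)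
      (γ * (∑ s, (infCount s : ℝ) * X t s) - τ * ∑ s, n s * X t s) t := by
    have h := HasDerivAt.fun_sum (fun s (_ : s ∈ (Finset.univ : Finset (Fin N → Bool))) =>
      (hX s t).const_mul ((N : ℝ) - infCount s))
    have e : (∑ s, ((N : ℝ) - infCount s) * ∑ s', (A s s' + B s s' + C s s') * X t s')
        = γ * (∑ s, (infCount s : ℝ) * X t s) - τ * ∑ s, n s * X t s := by
      calc (∑ s, ((N : ℝ) - infCount s) * ∑ s', (A s s' + B s s' + C s s') * X t s')
          = ∑ s', (γ * infCount s' - τ * n s') * X t s' := by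
            simp_rw [Finset.mul_sum]
            rw [Finset.sum_comm]
            refine Finset.sum_congr rfl fun s' _ => ?_
            rw [← keyS s', Finset.sum_mul]
            exact Finset.sum_congr rfl fun s _ => (mul_assoc _ _ _).symm
        _ = γ * (∑ s, (infCount s : ℝ) * X t s) - τ * ∑ s, n s * X t s := by
            simp_rw [sub_mul]
            rw [Finset.sum_sub_distrib, Finset.mul_sum, Finset.mul_sum]
            simp_rw [mul_assoc]
    exact e ▸ h
  have hDI : HasDerivAt (fun u => ∑ s, (infCount s : ℝ) * X u s)
      (τ * (∑ s, n s * X t s) - γ * ∑ s, (infCount s : ℝ) * X t s) t := by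
    have h := HasDerivAt.fun_sum (fun s (_ : s ∈ (Finset.univ : Finset (Fin N → Bool))) =>
      (hX s t).const_mul ((infCount s : ℝ)))
    have e : (∑ s, (infCount s : ℝ) * ∑ s', (A s s' + B s s' + C s s') * X t s')
        = τ * (∑ s, n s * X t s) - γ * ∑ s, (infCount s : ℝ) * X t s := by
      calc (∑ s, (infCount s : ℝ) * ∑ s', (A s s' + B s s' + C s s') * X t s')
          = ∑ s', (τ * n s' - γ * infCount s') * X t s' := by
            simp_rw [Finset.mul_sum]
            rw [Finset.sum_comm]
            refine Finset.sum_congr rfl fun s' _ => ?_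
            rw [← keyI s', Finset.sum_mul]
            exact Finset.sum_congr rfl fun s _ => (mul_assoc _ _ _).symm
        _ = τ * (∑ s, n s * X t s) - γ * ∑ s, (infCount s : ℝ) * X t s := by
            simp_rw [sub_mul]
            rw [Finset.sum_sub_distrib, Finset.mul_sum, Finset.mul_sum]
            simp_rw [mul_assoc]
    exact e ▸ h
  refine ⟨hDS, ?_⟩
  have h := hDS.fun_add hDI
  exact h.congr_deriv (by ring)
end

section
/- For the mean-field equation İ = τ(N−I)·d·f((e−1)I/N) − γI with f(x) = min(x,c): if τ·d·(e−1) ≤ γ, then I = 0 is the only equilibrium in [0, N]; if τ·d·(e−1) > γ, there exists a unique positive equilibrium I* ∈ (0, N]. -/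
set_option maxHeartbeats 1000000

/-- Threshold behaviour of the regular-hypergraph mean-field equation:
if τ·d·(e−1) ≤ γ then 0 is the only equilibrium in [0,N]; if τ·d·(e−1) > γ
there is a unique positive equilibrium in (0,N]. -/
theorem stmt16 (τ γ N c : ℝ) (d e : ℕ) (hτ : 0 < τ) (hγ : 0 < γ)
    (hd : 1 ≤ d) (he : 2 ≤ e) (hN : 1 ≤ N) (hc : 0 < c) :
    (τ * d * ((e : ℝ) - 1) ≤ γ →
      ∀ I ∈ Set.Icc (0 : ℝ) N,
        τ * (N - I) * d * min (((e : ℝ) - 1) * I / N) c - γ * I = 0 → I = 0) ∧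
    (γ < τ * d * ((e : ℝ) - 1) →
      ∃! I, I ∈ Set.Ioc (0 : ℝ) N ∧
        τ * (N - I) * d * min (((e : ℝ) - 1) * I / N) c - γ * I = 0) := by
  have hN0 : (0:ℝ) < N := by linarith
  have hd1 : (1:ℝ) ≤ (d:ℝ) := by exact_mod_cast hd
  have hd0 : (0:ℝ) < (d:ℝ) := by linarith
  have he2 : (2:ℝ) ≤ (e:ℝ) := by exact_mod_cast he
  have he1 : (1:ℝ) ≤ (e:ℝ) - 1 := by linarith
  have he0 : (0:ℝ) < (e:ℝ) - 1 := by linarith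
  constructor
  · intro hle I hI heq
    by_contra hI0
    have hIpos : 0 < I := lt_of_le_of_ne hI.1 (Ne.symm hI0)
    rcases eq_or_lt_of_le hI.2 with h | h
    · have hz : τ * (N - I) * d * min (((e : ℝ) - 1) * I / N) c = 0 := by
        rw [h]; ring
      nlinarith [mul_pos hγ hIpos]
    · have hm0 : (0:ℝ) ≤ min (((e : ℝ) - 1) * I / N) c :=
        le_min (by positivity) hc.le
      have hmle : min (((e : ℝ) - 1) * I / N) c ≤ ((e : ℝ) - 1) * I / N :=
        min_le_left _ _
      have hcoef : (0:ℝ) ≤ τ * (N - I) * d :=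
        mul_nonneg (mul_nonneg hτ.le (by linarith)) hd0.le
      have key : τ * (N - I) * d * min (((e : ℝ) - 1) * I / N) c
          ≤ τ * (N - I) * d * (((e : ℝ) - 1) * I / N) :=
        mul_le_mul_of_nonneg_left hmle hcoef
      have h2 : τ * (N - I) * d * (((e : ℝ) - 1) * I / N) < γ * I := by
        rw [show τ * (N - I) * d * (((e : ℝ) - 1) * I / N)
            = τ * (N - I) * d * (((e : ℝ) - 1) * I) / N from by ring,
          div_lt_iff₀ hN0]
        nlinarith [mul_le_mul_of_nonneg_right hle (mul_nonneg hIpos.le hN0.le),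
          mul_pos (mul_pos (mul_pos hτ hd0) he0) (mul_pos hIpos hIpos)]
      linarith
  · intro hgt
    have hA : (0:ℝ) < τ * (d:ℝ) * ((e:ℝ) - 1) := by positivity
    have hAγ : (0:ℝ) < τ * (d:ℝ) * ((e:ℝ) - 1) - γ := by linarith
    -- uniqueness helper: no two distinct roots in (0, N]
    have key : ∀ I J : ℝ, 0 < I → I < J → J ≤ N →
        τ * (N - I) * d * min (((e : ℝ) - 1) * I / N) c - γ * I = 0 →
        τ * (N - J) * d * min (((e : ℝ) - 1) * J / N) c - γ * J = 0 → False := by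
      intro I J hIpos hIJ hJN hIe hJe
      set mI := min (((e : ℝ) - 1) * I / N) c with hmI
      set mJ := min (((e : ℝ) - 1) * J / N) c with hmJ
      have hJpos : 0 < J := hIpos.trans hIJ
      have hmIpos : 0 < mI := lt_min (by positivity) hc
      have hIJ' : I ≤ J := hIJ.le
      have hm : mJ * I ≤ mI * J := by
        rcases le_or_gt (((e : ℝ) - 1) * J / N) c with h1 | h1
        · have h2 : ((e : ℝ) - 1) * I / N ≤ c := by
            refine le_trans ?_ h1
            gcongr
          rw [hmJ, hmI, min_eq_left h1, min_eq_left h2]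
          apply le_of_eq; ring
        · rw [hmJ, min_eq_right h1.le]
          rcases le_total (((e : ℝ) - 1) * I / N) c with h2 | h2
          · rw [hmI, min_eq_left h2]
            have h3 : c * I ≤ ((e : ℝ) - 1) * J / N * I :=
              mul_le_mul_of_nonneg_right h1.le hIpos.le
            have h4 : ((e : ℝ) - 1) * J / N * I = ((e : ℝ) - 1) * I / N * J := by
              ring
            linarith
          · rw [hmI, min_eq_right h2]
            nlinarith
      have eqI : τ * (N - I) * d * mI = γ * I := by linarith
      have eqJ : τ * (N - J) * d * mJ = γ * J := by linarith
      have hcJ : (0:ℝ) ≤ τ * (N - J) * d :=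
        mul_nonneg (mul_nonneg hτ.le (by linarith)) hd0.le
      have s1 : τ * (N - J) * d * (mJ * I) ≤ τ * (N - J) * d * (mI * J) :=
        mul_le_mul_of_nonneg_left hm hcJ
      have s2 : τ * (N - J) * d * (mI * J) < τ * (N - I) * d * (mI * J) := by
        nlinarith [mul_pos (mul_pos (mul_pos hτ hd0) (mul_pos hmIpos hJpos))
          (sub_pos.mpr hIJ)]
      have t1 : τ * (N - I) * d * (mI * J) = γ * I * J := by
        linear_combination J * eqI
      have t2 : τ * (N - J) * d * (mJ * I) = γ * J * I := by
        linear_combination I * eqJ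
      linarith
    -- existence
    set I₁ : ℝ := N * (τ * (d:ℝ) * ((e:ℝ) - 1) - γ) / (τ * (d:ℝ) * ((e:ℝ) - 1))
      with hI₁def
    rcases le_or_gt (((e:ℝ) - 1) * I₁ / N) c with hcase | hcase
    · -- interior root I₁ = N (A - γ)/A
      have hI₁pos : 0 < I₁ := div_pos (mul_pos hN0 hAγ) hA
      have hI₁N : I₁ ≤ N := by rw [hI₁def, div_le_iff₀ hA]; nlinarith
      have hI₁e : τ * (N - I₁) * d * min (((e : ℝ) - 1) * I₁ / N) c - γ * I₁ = 0 := by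
        rw [min_eq_left hcase, hI₁def]
        field_simp
        ring
      refine ⟨I₁, ⟨⟨hI₁pos, hI₁N⟩, hI₁e⟩, ?_⟩
      rintro J ⟨⟨hJ0, hJN⟩, hJe⟩
      rcases lt_trichotomy J I₁ with h | h | h
      · exact absurd (key J I₁ hJ0 h hI₁N hJe hI₁e) (by simp)
      · exact h
      · exact absurd (key I₁ J hI₁pos h hJN hI₁e hJe) (by simp)
    · -- saturated root I₂ = τ d c N / (τ d c + γ)
      have hden : (0:ℝ) < τ * (d:ℝ) * c + γ := by positivity
      have hb : τ * (d:ℝ) * c + γ < τ * (d:ℝ) * ((e:ℝ) - 1) := by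
        rw [hI₁def] at hcase
        have hsimp : ((e:ℝ) - 1) * (N * (τ * (d:ℝ) * ((e:ℝ) - 1) - γ)
            / (τ * (d:ℝ) * ((e:ℝ) - 1))) / N
            = ((e:ℝ) - 1) * (τ * (d:ℝ) * ((e:ℝ) - 1) - γ) / (τ * (d:ℝ) * ((e:ℝ) - 1)) := by
          field_simp
        rw [hsimp, lt_div_iff₀ hA] at hcase
        nlinarith
      set I₂ : ℝ := τ * (d:ℝ) * c * N / (τ * (d:ℝ) * c + γ) with hI₂def
      have hI₂pos : 0 < I₂ := by rw [hI₂def]; positivity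
      have hI₂N : I₂ ≤ N := by rw [hI₂def, div_le_iff₀ hden]; nlinarith
      have harg : c ≤ ((e:ℝ) - 1) * I₂ / N := by
        have hsimp : ((e:ℝ) - 1) * I₂ / N
            = ((e:ℝ) - 1) * (τ * (d:ℝ) * c) / (τ * (d:ℝ) * c + γ) := by
          rw [hI₂def]; field_simp
        rw [hsimp, le_div_iff₀ hden]
        nlinarith
      have hI₂e : τ * (N - I₂) * d * min (((e : ℝ) - 1) * I₂ / N) c - γ * I₂ = 0 := by
        rw [min_eq_right harg, hI₂def]
        field_simp
        ring
      refine ⟨I₂, ⟨⟨hI₂pos, hI₂N⟩, hI₂e⟩, ?_⟩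
      rintro J ⟨⟨hJ0, hJN⟩, hJe⟩
      rcases lt_trichotomy J I₂ with h | h | h
      · exact absurd (key J I₂ hJ0 h hI₂N hJe hI₂e) (by simp)
      · exact h
      · exact absurd (key I₂ J hI₂pos h hJN hI₂e hJe) (by simp)
end
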